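/- The distance matrix of the complete multipartite graph K_{n_1,...,n_k} (n = Σ n_i ≥ 3, k ≥ 2) has -2 as an eigenvalue with multiplicity exactly n - k. -/

import Mathlib

open Polynomial Finset

section myAux

open Matrix

variable {m : Type*} [Fintype m] [DecidableEq m] {R : Type*} [CommRing R]

lemma my_charpoly_conj (U M V : Matrix m m R) (hUV : U * V = 1) :
    (U * M * V).charpoly = M.charpoly := by
  classical
  set f : Matrix m m R →+* Matrix m m R[X] := RingHom.mapMatrix (m := m) (C : R →+* R[X]) with hf
  have hfUV : f U * f V = 1 := by rw [← _root_.map_mul, hUV, _root_.map_one]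
  have hcomm : Commute (Matrix.scalar m (X : R[X])) (f U) :=
    scalar_commute _ (fun r => Commute.all _ r) _
  have hcm : charmatrix (U * M * V) = f U * charmatrix M * f V := by
    have h1 : f U * (Matrix.scalar m (X : R[X]) - f M) * f V =
        f U * Matrix.scalar m (X : R[X]) * f V - f U * f M * f V := by noncomm_ring
    rw [charmatrix, charmatrix, h1, ← hcomm.eq, mul_assoc (Matrix.scalar m (X : R[X])), hfUV,
      mul_one, _root_.map_mul, _root_.map_mul]
  have hdet : (f U).det * (f V).det = 1 := by
    rw [← det_mul, hfUV, det_one]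
  rw [Matrix.charpoly, Matrix.charpoly, hcm, det_mul, det_mul, mul_comm,
    ← mul_assoc, mul_comm ((f V).det), hdet, one_mul]

lemma my_charpoly_diagonal (w : m → R) :
    (diagonal w).charpoly = ∏ i, (X - C (w i)) := by
  have h : charmatrix (diagonal w) = diagonal fun i => X - C (w i) := by
    ext i j
    by_cases h : i = j
    · subst h; simp
    · simp [h, diagonal_apply_ne _ h]
  rw [Matrix.charpoly, h, det_diagonal]

variable {A : Matrix m m ℝ}

lemma my_charpoly_eq (hA : A.IsHermitian) :
    A.charpoly = ∏ i, (X - C (hA.eigenvalues i)) := by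
  have hU : (hA.eigenvectorUnitary : Matrix m m ℝ) * star (hA.eigenvectorUnitary : Matrix m m ℝ)
      = 1 := (Matrix.mem_unitaryGroup_iff).mp (hA.eigenvectorUnitary).2
  have hcoe : (RCLike.ofReal ∘ hA.eigenvalues : m → ℝ) = hA.eigenvalues := by
    funext i; simp
  conv_lhs => rw [hA.spectral_theorem]
  rw [Unitary.conjStarAlgAut_apply, my_charpoly_conj _ _ _ hU, hcoe, my_charpoly_diagonal]

lemma my_rank_add_smul (hA : A.IsHermitian) (c : ℝ) :
    (A + c • 1).rank = Fintype.card {i // hA.eigenvalues i + c ≠ 0} := by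
  have hU : (hA.eigenvectorUnitary : Matrix m m ℝ) * star (hA.eigenvectorUnitary : Matrix m m ℝ)
      = 1 := (Matrix.mem_unitaryGroup_iff).mp (hA.eigenvectorUnitary).2
  set U : Matrix m m ℝ := (hA.eigenvectorUnitary : Matrix m m ℝ) with hUdef
  have hsU : star U * U = 1 := mul_eq_one_comm.mp hU
  have hdetU : IsUnit U.det := by
    apply IsUnit.of_mul_eq_one (star U).det
    rw [← det_mul, hU, det_one]
  have hdetUs : IsUnit (star U).det := by
    apply IsUnit.of_mul_eq_one U.det
    rw [← det_mul, hsU, det_one]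
  have hcoe : (RCLike.ofReal ∘ hA.eigenvalues : m → ℝ) = hA.eigenvalues := by
    funext i; simp
  have hsp : A + c • 1 = U * diagonal (fun i => hA.eigenvalues i + c) * star U := by
    have h1 : diagonal (fun i => hA.eigenvalues i + c) =
        diagonal hA.eigenvalues + c • (1 : Matrix m m ℝ) := by
      rw [smul_one_eq_diagonal, diagonal_add]
    rw [h1, mul_add, add_mul]
    congr 1
    · conv_lhs => rw [hA.spectral_theorem, hcoe, Unitary.conjStarAlgAut_apply]
    · rw [mul_smul_comm, mul_one, smul_mul_assoc, hU]
  rw [hsp, rank_mul_eq_left_of_isUnit_det _ _ hdetUs,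
    rank_mul_eq_right_of_isUnit_det _ _ hdetU, rank_diagonal]

lemma my_rootMult {ι : Type*} [Fintype ι] [DecidableEq ι] (e : ι → ℝ) (μ : ℝ) :
    (∏ i, (X - C (e i))).rootMultiplicity μ = (univ.filter fun i => e i = μ).card := by
  classical
  rw [← Polynomial.count_roots]
  have h : (∏ i, (X - C (e i))) = ((univ.val.map e).map fun a => X - C a).prod := by
    rw [Multiset.map_map]; rfl
  rw [h, Polynomial.roots_multiset_prod_X_sub_C, Multiset.count_map]
  have h2 : Multiset.filter (fun a => μ = e a) univ.val
      = Multiset.filter (fun i => e i = μ) univ.val :=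
    Multiset.filter_congr fun a _ => eq_comm
  rw [h2, Finset.card, Finset.filter_val]

end myAux

/-- The distance matrix of the complete multipartite graph `K_{n₁,…,n_k}`. -/
noncomputable def distMatrixCM {k : ℕ} (n : Fin k → ℕ) :
    Matrix (Σ i, Fin (n i)) (Σ i, Fin (n i)) ℝ :=
  Matrix.of fun u v => if u = v then 0 else if u.1 = v.1 then 2 else 1

open Matrix in
lemma my_rank_shift (k : ℕ) (n : Fin k → ℕ) (hn : ∀ i, 0 < n i) :
    (distMatrixCM n + (2:ℝ) • 1).rank = k := by
  classical
  set M2 := distMatrixCM n + (2:ℝ) • (1 : Matrix (Σ i, Fin (n i)) (Σ i, Fin (n i)) ℝ) with hM2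
  set w : Fin k → ((Σ i, Fin (n i)) → ℝ) := fun j u => if u.1 = j then 2 else 1 with hw
  have hcol : M2ᵀ = fun v => w v.1 := by
    funext v u
    simp only [transpose_apply, hM2, Matrix.add_apply, Matrix.smul_apply, Matrix.one_apply,
      distMatrixCM, of_apply, hw]
    by_cases h : u = v
    · subst h; simp
    · by_cases h2 : u.1 = v.1 <;> simp [h, h2]
  have hrange : Set.range M2ᵀ = Set.range w := by
    rw [hcol]
    ext x
    constructor
    · rintro ⟨v, rfl⟩; exact ⟨v.1, rfl⟩
    · rintro ⟨j, rfl⟩; exact ⟨⟨j, ⟨0, hn j⟩⟩, rfl⟩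
  have hli : LinearIndependent ℝ w := by
    rw [Fintype.linearIndependent_iff]
    intro c hc
    have heval : ∀ i : Fin k, (∑ j, c j) + c i = 0 := by
      intro i
      have h0 := congrFun hc ⟨i, ⟨0, hn i⟩⟩
      simp only [Finset.sum_apply, Pi.smul_apply, hw, smul_eq_mul, Pi.zero_apply] at h0
      have h1 : ∀ j : Fin k, c j * (if i = j then (2:ℝ) else 1)
          = c j + (if i = j then c j else 0) := by
        intro j; by_cases h : i = j <;> simp [h]; ring
      rw [Finset.sum_congr rfl fun j _ => h1 j, Finset.sum_add_distrib,
        Finset.sum_ite_eq _ i c] at h0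
      simpa using h0
    set S := ∑ j, c j with hS
    have hCS : ∀ i, c i = -S := fun i => by have := heval i; linarith
    have hSk : S = (k:ℝ) * (-S) := by
      calc S = ∑ j : Fin k, c j := hS
      _ = ∑ _j : Fin k, (-S) := Finset.sum_congr rfl fun j _ => hCS j
      _ = (k:ℝ) * (-S) := by rw [Finset.sum_const, Finset.card_univ, Fintype.card_fin,
            nsmul_eq_mul]
    have hS0 : S = 0 := by nlinarith [hSk]
    intro j
    rw [hCS j, hS0, neg_zero]
  rw [Matrix.rank_eq_finrank_span_cols, show M2.col = M2ᵀ from rfl, hrange, finrank_span_eq_card hli, Fintype.card_fin]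

/-- For `n = Σ nᵢ ≥ 3` and `k ≥ 2`, `-2` is an eigenvalue of the distance matrix of
`K_{n₁,…,n_k}` with multiplicity exactly `n - k`. -/
theorem distMatrixCM_eigenvalue_neg_two (k : ℕ) (n : Fin k → ℕ)
    (hn : ∀ i, 0 < n i) (hsum : 3 ≤ ∑ i, n i) (hk : 2 ≤ k) :
    (distMatrixCM n).charpoly.rootMultiplicity (-2) = (∑ i, n i) - k := by
  classical
  have hH : (distMatrixCM n).IsHermitian := by
    ext u v
    simp only [Matrix.conjTranspose_apply, distMatrixCM, Matrix.of_apply, star_trivial]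
    by_cases h : u = v
    · subst h; simp
    · by_cases h2 : u.1 = v.1
      · rw [if_neg (Ne.symm h), if_neg h, if_pos h2.symm, if_pos h2]
      · rw [if_neg (Ne.symm h), if_neg h, if_neg (fun hvu => h2 hvu.symm), if_neg h2]
  rw [my_charpoly_eq hH, my_rootMult]
  have hrank := my_rank_add_smul hH 2
  rw [my_rank_shift k n hn] at hrank
  have h1 : (univ.filter fun i => ¬ hH.eigenvalues i = -2).card = k := by
    have hfeq : (univ.filter fun i => ¬ hH.eigenvalues i = -2)
        = (univ.filter fun i => hH.eigenvalues i + 2 ≠ 0) := by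
      apply Finset.filter_congr
      intro x _
      constructor
      · intro h h2; exact h (by linarith)
      · intro h h2; exact h (by rw [h2]; ring)
    rw [hfeq, ← Fintype.card_subtype]
    exact hrank.symm
  have h2 := Finset.card_filter_add_card_filter_not
    (s := (univ : Finset (Σ i, Fin (n i)))) (p := fun i => hH.eigenvalues i = -2)
  have h3 : (univ : Finset (Σ i, Fin (n i))).card = ∑ i, n i := by
    simp
  omega
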